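/- Let a < b < c be reals. Define the three lines ℓ_A : y = (a + (b+c)/2)x − a(b+c)/2, ℓ_B : y = (b + (c+a)/2)x − b(c+a)/2, ℓ_C : y = (c + (a+b)/2)x − c(a+b)/2 (the bisectors of the positive difference angles at the vertices A = (a,a²), B = (b,b²), C = (c,c²) of the triangle inscribed in y = x²). These lines are pairwise nonparallel; let I = ℓ_A ∩ ℓ_C, I_A = ℓ_A ∩ ℓ_B, I_C = ℓ_C ∩ ℓ_B. Then the centroid (I + I_A + I_C)/3 of the bisector triangle equals the midpoint of G and G_T, where G = ((a+b+c)/3, (a²+b²+c²)/3) is the centroid of A, B, C and G_T = ((a+b+c)/3, (ab+bc+ca)/3) is the centroid of the tangent triangle with vertices ((b+c)/2, bc), ((c+a)/2, ca), ((a+b)/2, ab). Explicitly, (I + I_A + I_C)/3 = ((a+b+c)/3, (a²+b²+c²+ab+bc+ca)/6). -/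
import Mathlib


/-- Centroid of the bisector triangle: for `a < b < c`, the three bisector lines are
pairwise nonparallel, and the centroid of the bisector triangle `I, I_A, I_C` equals
`((a+b+c)/3, (a²+b²+c²+ab+bc+ca)/6)`, the midpoint of the centroid
`G = ((a+b+c)/3, (a²+b²+c²)/3)` and the tangent-triangle centroid
`G_T = ((a+b+c)/3, (ab+bc+ca)/3)`. -/
theorem bisector_triangle_centroid (a b c : ℝ) (hab : a < b) (hbc : b < c)
    (I IA IC : ℝ × ℝ)
    (hI1 : I.2 = (a + (b + c) / 2) * I.1 - a * (b + c) / 2)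
    (hI2 : I.2 = (c + (a + b) / 2) * I.1 - c * (a + b) / 2)
    (hIA1 : IA.2 = (a + (b + c) / 2) * IA.1 - a * (b + c) / 2)
    (hIA2 : IA.2 = (b + (c + a) / 2) * IA.1 - b * (c + a) / 2)
    (hIC1 : IC.2 = (c + (a + b) / 2) * IC.1 - c * (a + b) / 2)
    (hIC2 : IC.2 = (b + (c + a) / 2) * IC.1 - b * (c + a) / 2) :
    (a + (b + c) / 2 ≠ b + (c + a) / 2 ∧
     b + (c + a) / 2 ≠ c + (a + b) / 2 ∧
     a + (b + c) / 2 ≠ c + (a + b) / 2) ∧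
    ((I.1 + IA.1 + IC.1) / 3, (I.2 + IA.2 + IC.2) / 3) =
      (((a + b + c) / 3 : ℝ), (a ^ 2 + b ^ 2 + c ^ 2 + a * b + b * c + c * a) / 6) ∧
    ((I.1 + IA.1 + IC.1) / 3, (I.2 + IA.2 + IC.2) / 3) =
      ((((a + b + c) / 3 + (a + b + c) / 3) / 2 : ℝ),
       ((a ^ 2 + b ^ 2 + c ^ 2) / 3 + (a * b + b * c + c * a) / 3) / 2) := by
  have hIx : I.1 = b := by
    have h : (a - c) * I.1 = (a - c) * b := by
      have := hI1.symm.trans hI2; linarith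
    exact mul_left_cancel₀ (by linarith) h
  have hIAx : IA.1 = c := by
    have h : (a - b) * IA.1 = (a - b) * c := by
      have := hIA1.symm.trans hIA2; linarith
    exact mul_left_cancel₀ (by linarith) h
  have hICx : IC.1 = a := by
    have h : (c - b) * IC.1 = (c - b) * a := by
      have := hIC1.symm.trans hIC2; linarith
    exact mul_left_cancel₀ (by linarith) h
  rw [hIx] at hI1; rw [hIAx] at hIA1; rw [hICx] at hIC1
  refine ⟨⟨by intro h; linarith, by intro h; linarith, by intro h; linarith⟩, ?_, ?_⟩ <;>
    rw [Prod.ext_iff] <;> constructor <;> simp only [hIx, hIAx, hICx, hI1, hIA1, hIC1] <;> ring
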